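/- Fix a positive integer k. The generating function of compositions with no part divisible by k satisfies (1 - x - x^2 - ... - x^k) · C(x) = 1 - x^k as formal power series, where C(x) = 1 + Σ_{n≥1} c_{\bar A}(n) x^n and A = {jk : j ≥ 1}. -/

import Mathlib

noncomputable def compCount (A : Set ℕ) (n : ℕ) : ℕ :=
  Nat.card {l : List ℕ // l.sum = n ∧ ∀ x ∈ l, 0 < x ∧ x ∈ A}

namespace GFAux

/-- Lists summing to `n` with all parts positive and not divisible by `k`. -/
def S (k n : ℕ) : Type := {l : List ℕ // l.sum = n ∧ ∀ x ∈ l, 0 < x ∧ ¬ k ∣ x}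

instance (k n : ℕ) : Finite (S k n) := by
  have hinj : Function.Injective
      (fun l : S k n => (⟨l.1, fun {i} hi => (l.2.2 i hi).1, l.2.1⟩ : Composition n)) := by
    intro a b h
    exact Subtype.ext (congrArg Composition.blocks h)
  exact Finite.of_injective _ hinj

/-- The count. -/
noncomputable def c (k n : ℕ) : ℕ := Nat.card (S k n)

lemma c_zero (k : ℕ) : c k 0 = 1 := by
  have : Unique (S k 0) := by
    refine ⟨⟨⟨[], rfl, by simp⟩⟩, ?_⟩
    rintro ⟨l, hs, hp⟩
    have hl : l = [] := by
      rcases l with _ | ⟨a, t⟩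
      · rfl
      · exfalso
        have := (hp a (by simp)).1
        simp [List.sum_cons] at hs
        omega
    subst hl; rfl
  exact Nat.card_unique

lemma card_sigma_finset {ι : Type*} (s : Finset ι) (β : ι → Type*) [∀ i, Finite (β i)] :
    Nat.card (Σ i : s, β i) = ∑ i ∈ s, Nat.card (β i) := by
  letI : ∀ i : s, Fintype (β i) := fun i => Fintype.ofFinite (β i)
  rw [Nat.card_eq_fintype_card, Fintype.card_sigma,
    ← Finset.sum_coe_sort s (fun i => Nat.card (β i))]
  congr 1
  ext i
  rw [Nat.card_eq_fintype_card]

lemma c_rec (k n : ℕ) (hn : 1 ≤ n) :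
    c k n = ∑ i ∈ (Finset.Icc 1 n).filter (fun i => ¬ k ∣ i), c k (n - i) := by
  classical
  set F := (Finset.Icc 1 n).filter (fun i => ¬ k ∣ i) with hF
  have key : ∀ i : F, (i : ℕ) ≤ n ∧ 1 ≤ (i : ℕ) ∧ ¬ k ∣ (i : ℕ) := by
    rintro ⟨i, hi⟩
    simp only [hF, Finset.mem_filter, Finset.mem_Icc] at hi
    exact ⟨hi.1.2, hi.1.1, hi.2⟩
  let f : (Σ i : F, S k (n - (i : ℕ))) → S k n := fun p =>
    ⟨(p.1 : ℕ) :: p.2.1, by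
      simp only [List.sum_cons, p.2.2.1]
      exact Nat.add_sub_cancel' (key p.1).1
      , by
      intro x hx
      rcases List.mem_cons.mp hx with h | h
      · subst h; exact ⟨(key p.1).2.1, (key p.1).2.2⟩
      · exact p.2.2.2 x h⟩
  have hinj : Function.Injective f := by
    rintro ⟨⟨i, hi⟩, ⟨t, ht⟩⟩ ⟨⟨j, hj⟩, ⟨s, hs⟩⟩ h
    have h' : i :: t = j :: s := congrArg Subtype.val h
    injection h' with h1 h2
    subst h1
    subst h2
    rfl
  have hsurj : Function.Surjective f := by
    rintro ⟨l, hls, hlp⟩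
    rcases l with _ | ⟨a, t⟩
    · exfalso; simp at hls; omega
    · have hpa := hlp a (by simp)
      have hasum : a + t.sum = n := by simpa [List.sum_cons] using hls
      have haF : a ∈ F := by
        simp only [hF, Finset.mem_filter, Finset.mem_Icc]
        exact ⟨⟨hpa.1, by omega⟩, hpa.2⟩
      refine ⟨⟨⟨a, haF⟩, ⟨t, show t.sum = n - a by omega,
        fun x hx => hlp x (by simp [hx])⟩⟩, ?_⟩
      rfl
  have := Nat.card_congr (Equiv.ofBijective f ⟨hinj, hsurj⟩)
  rw [c, ← this, card_sigma_finset F (fun i => S k (n - i))]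
  rfl

/-- Generating function of non-multiples of `k`. -/
noncomputable def B (k : ℕ) : PowerSeries ℤ :=
  PowerSeries.mk fun m => if 0 < m ∧ ¬ k ∣ m then 1 else 0

noncomputable def C (k : ℕ) : PowerSeries ℤ := PowerSeries.mk fun n => (c k n : ℤ)

lemma coeff_BC (k n : ℕ) :
    (PowerSeries.coeff n) (B k * C k) =
      ∑ i ∈ (Finset.Icc 1 n).filter (fun i => ¬ k ∣ i), (c k (n - i) : ℤ) := by
  classical
  rw [PowerSeries.coeff_mul, Finset.Nat.sum_antidiagonal_eq_sum_range_succ_mk]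
  simp only [B, C, PowerSeries.coeff_mk, ite_mul, one_mul, zero_mul]
  rw [← Finset.sum_filter]
  congr 1
  ext i
  simp only [Finset.mem_filter, Finset.mem_range, Finset.mem_Icc]
  omega

lemma one_sub_B_mul_C (k : ℕ) : (1 - B k) * C k = 1 := by
  ext n
  rw [sub_mul, one_mul, map_sub, coeff_BC, PowerSeries.coeff_one]
  rcases Nat.eq_zero_or_pos n with h | h
  · subst h
    simp [C, c_zero]
  · have := c_rec k n h
    have hn0 : n ≠ 0 := by omega
    simp only [C, PowerSeries.coeff_mk, hn0, if_false]
    rw [this]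
    push_cast
    ring

lemma not_dvd_of_lt {k n : ℕ} (h1 : 0 < n) (h2 : n < k) : ¬ k ∣ n := by
  intro h
  exact absurd (Nat.le_of_dvd h1 h) (by omega)

lemma poly_id (k : ℕ) (hk : 1 ≤ k) :
    (1 - ∑ i ∈ Finset.Icc 1 k, (PowerSeries.X : PowerSeries ℤ) ^ i) =
      (1 - PowerSeries.X ^ k) * (1 - B k) := by
  classical
  ext n
  have hsum : (PowerSeries.coeff n) (∑ i ∈ Finset.Icc 1 k, (PowerSeries.X : PowerSeries ℤ) ^ i)
      = if n ∈ Finset.Icc 1 k then 1 else 0 := by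
    rw [map_sum]
    simp only [PowerSeries.coeff_X_pow]
    rw [Finset.sum_ite_eq (Finset.Icc 1 k) n (fun _ => (1 : ℤ))]
  have hXB : (PowerSeries.coeff n) (PowerSeries.X ^ k * B k)
      = if k ≤ n then (if 0 < n - k ∧ ¬ k ∣ (n - k) then (1:ℤ) else 0) else 0 := by
    rw [PowerSeries.coeff_X_pow_mul']
    simp [B]
  have expand : (1 - PowerSeries.X ^ k) * (1 - B k)
      = 1 - B k - PowerSeries.X ^ k + PowerSeries.X ^ k * B k := by ring
  rw [expand, map_sub, map_add, map_sub, map_sub, hsum, hXB,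
    PowerSeries.coeff_one, PowerSeries.coeff_X_pow]
  simp only [B, PowerSeries.coeff_mk, Finset.mem_Icc]
  rcases Nat.eq_zero_or_pos n with h0 | h0
  · subst h0
    have : ¬ (k ≤ 0) := by omega
    simp [this, hk, show (0:ℕ) ≠ k by omega]
  rcases lt_trichotomy n k with hlt | heq | hgt
  · have hnd : ¬ k ∣ n := not_dvd_of_lt h0 hlt
    have h1 : (1 ≤ n ∧ n ≤ k) := ⟨h0, by omega⟩
    simp only [if_pos h1, if_pos (⟨h0, hnd⟩ : 0 < n ∧ ¬ k ∣ n),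
      if_neg (show n ≠ 0 by omega), if_neg (show n ≠ k by omega),
      if_neg (show ¬ k ≤ n by omega)]
    ring
  · simp only [if_pos (show 1 ≤ n ∧ n ≤ k by omega), if_neg (show n ≠ 0 by omega),
      if_pos heq, if_pos (show k ≤ n by omega),
      if_neg (show ¬ (0 < n ∧ ¬ k ∣ n) by rw [heq]; simp),
      if_neg (show ¬ (0 < n - k ∧ ¬ k ∣ (n - k)) by rw [heq]; simp)]
    ring
  · have hdvd : k ∣ (n - k) ↔ k ∣ n := by
      constructor
      · intro h
        have : n = (n - k) + k := by omega
        rw [this]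
        exact dvd_add h dvd_rfl
      · intro h
        exact Nat.dvd_sub h dvd_rfl
    have h1 : ¬ (1 ≤ n ∧ n ≤ k) := by omega
    simp only [if_neg h1, if_neg (show n ≠ 0 by omega), if_neg (show n ≠ k by omega),
      if_pos (show k ≤ n by omega)]
    by_cases hd : k ∣ n
    · rw [if_neg (by tauto), if_neg (by rw [hdvd]; tauto)]
      ring
    · rw [if_pos ⟨h0, hd⟩, if_pos ⟨by omega, by rw [hdvd]; exact hd⟩]
      ring

lemma compCount_eq (k n : ℕ) : compCount {x | 0 < x ∧ ¬ k ∣ x} n = c k n := by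
  apply Nat.card_congr
  apply Equiv.subtypeEquivRight
  intro l
  constructor
  · rintro ⟨h1, h2⟩
    exact ⟨h1, fun x hx => (h2 x hx).2⟩
  · rintro ⟨h1, h2⟩
    exact ⟨h1, fun x hx => ⟨(h2 x hx).1, h2 x hx⟩⟩

end GFAux

theorem generating_function_avoiding_multiples_of_k (k : ℕ) (hk : 1 ≤ k) :
    (1 - ∑ i ∈ Finset.Icc 1 k, (PowerSeries.X : PowerSeries ℤ) ^ i) *
      (PowerSeries.mk fun n => (compCount {x | 0 < x ∧ ¬ k ∣ x} n : ℤ)) =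
      1 - PowerSeries.X ^ k := by
  have hC : (PowerSeries.mk fun n => (compCount {x | 0 < x ∧ ¬ k ∣ x} n : ℤ)) = GFAux.C k := by
    ext n
    simp only [GFAux.C, PowerSeries.coeff_mk]
    rw [GFAux.compCount_eq]
  rw [hC, GFAux.poly_id k hk, mul_assoc, GFAux.one_sub_B_mul_C, mul_one]
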